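/- Let L be a reduced 1-compact compactly generated multiplicative lattice. If x* and y* are distinct prime elements of L, then x·y = 0. -/

import Mathlib

variable {α : Type*}

/-- Iterated product `a^n` in a multiplicative lattice (with `a^0 = ⊤`). -/
def mpow [CompleteLattice α] (mul : α → α → α) (a : α) : ℕ → α
  | 0 => ⊤
  | n + 1 => mul a (mpow mul a n)

/-- `mul` makes the complete lattice `α` into a multiplicative lattice. -/
def IsMulLattice [CompleteLattice α] (mul : α → α → α) : Prop :=
  (∀ a b : α, mul a b = mul b a) ∧
  (∀ a b c : α, mul (mul a b) c = mul a (mul b c)) ∧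
  (∀ (a : α) (s : Set α), mul a (sSup s) = ⨆ b ∈ s, mul a b) ∧
  (∀ a b : α, mul a b ≤ a ⊓ b) ∧
  (∀ a : α, mul a ⊤ = a)

/-- The multiplicative lattice is reduced: the only nilpotent element is `⊥`. -/
def LatReduced [CompleteLattice α] (mul : α → α → α) : Prop :=
  ∀ (a : α) (n : ℕ), mpow mul a (n + 1) = ⊥ → a = ⊥

/-- `a* = sup {x | x·a = 0}`. -/
def starAnn [CompleteLattice α] (mul : α → α → α) (a : α) : α :=
  sSup {x : α | mul x a = ⊥}

/-- A prime element of a multiplicative lattice. -/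
def IsPrimeElt [CompleteLattice α] (mul : α → α → α) (p : α) : Prop :=
  p ≠ ⊤ ∧ ∀ a b : α, mul a b ≤ p → a ≤ p ∨ b ≤ p

/-- The zero-divisor graph `Γᵐ(L)` of a multiplicative lattice. -/
def zdg [CompleteLattice α] (mul : α → α → α) : SimpleGraph α where
  Adj a b := a ≠ b ∧ a ≠ ⊥ ∧ b ≠ ⊥ ∧ mul a b = ⊥ ∧ mul b a = ⊥
  symm := ⟨fun a b h => ⟨h.1.symm, h.2.2.1, h.2.1, h.2.2.2.2, h.2.2.2.1⟩⟩
  loopless := ⟨fun a h => h.1 rfl⟩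

/-- `Clique(Γᵐ(L)) < ∞`. -/
def CliqueBounded [CompleteLattice α] (mul : α → α → α) : Prop :=
  ∃ N : ℕ, ∀ s : Finset α, (zdg mul).IsClique ↑s → s.card ≤ N

theorem distinct_prime_annihilators [CompleteLattice α] [IsCompactlyGenerated α]
    (mul : α → α → α) (hL : IsMulLattice mul) (hred : LatReduced mul)
    (htop : IsCompactElement (⊤ : α)) (x y : α)
    (hx : IsPrimeElt mul (starAnn mul x)) (hy : IsPrimeElt mul (starAnn mul y))
    (hne : starAnn mul x ≠ starAnn mul y) :
    mul x y = ⊥ := by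
  obtain ⟨hcomm, hassoc, hdist, hinf, hone⟩ := hL
  have hmono : ∀ a b c : α, a ≤ b → mul c a ≤ mul c b := by
    intro a b c hab
    have h : mul c b = mul c (sSup {a, b}) := by
      rw [sSup_pair, sup_eq_right.mpr hab]
    rw [h, hdist c {a, b}]
    exact le_biSup _ (Set.mem_insert a {b})
  have hann : ∀ a : α, mul a (starAnn mul a) = ⊥ := by
    intro a
    rw [starAnn, hdist]
    apply le_bot_iff.mp
    apply iSup_le; intro b; apply iSup_le; intro hb
    rw [hcomm]; exact le_of_eq hb
  have h1 : mul x (starAnn mul x) ≤ starAnn mul y := by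
    rw [hann]; exact bot_le
  have h2 : mul y (starAnn mul y) ≤ starAnn mul x := by
    rw [hann]; exact bot_le
  rcases hy.2 _ _ h1 with hxy | hxy
  · apply le_bot_iff.mp
    calc mul x y ≤ mul (starAnn mul y) y := by rw [hcomm x y, hcomm _ y]; exact hmono _ _ _ hxy
    _ = ⊥ := by rw [hcomm]; exact hann y
  · rcases hx.2 _ _ h2 with hyx | hyx
    · apply le_bot_iff.mp
      calc mul x y ≤ mul x (starAnn mul x) := hmono _ _ _ hyx
      _ = ⊥ := hann x
    · exact absurd (le_antisymm hxy hyx) hne
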